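/- Let v : ℝ → ℝ be continuous with asymptotics v(x) = α/x + O(x^{-4}) as x → +∞ and v(x) = d(-x)^{-1/4} cos((2/3)(-x)^{3/2} - (3/4)d² ln(-x) + φ) + α/x + O((-x)^{-7/4}) as x → -∞, for real constants α, d, φ. Then the principal value integral c := lim_{y→∞} ∫_{-y}^{y} v(x) dx exists, and for every Schwartz function ψ, lim_{t→0^+} ∫_ℝ t^{-1/3} v(x t^{-1/3}) ψ(x) dx = c·ψ(0) + α·lim_{ε→0^+} ∫_{|x|>ε} ψ(x)/x dx. That is, t^{-1/3} v(x t^{-1/3}) → c·δ(x) + α·p.v.(1/x) in 𝒮'(ℝ) as t → 0^+. -/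

import Mathlib

open Filter Real MeasureTheory Asymptotics intervalIntegral Set

lemma bdd_of_tendsto {f : ℝ → ℝ} (hf : Continuous f) {A B : ℝ}
    (h1 : Tendsto f atTop (nhds A)) (h2 : Tendsto f atBot (nhds B)) :
    ∃ M : ℝ, 0 ≤ M ∧ ∀ x, |f x| ≤ M := by
  have e1 : ∀ᶠ x in atTop, |f x| ≤ |A| + 1 :=
    h1.abs.eventually_le_const (lt_add_one |A|)
  have e2 : ∀ᶠ x in atBot, |f x| ≤ |B| + 1 :=
    h2.abs.eventually_le_const (lt_add_one |B|)
  obtain ⟨x1, hx1⟩ := eventually_atTop.1 e1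
  obtain ⟨x0, hx0⟩ := eventually_atBot.1 e2
  obtain ⟨C, hC⟩ := (isCompact_Icc (a := x0) (b := x1)).exists_bound_of_continuousOn
    hf.continuousOn
  refine ⟨max (max (|A|+1) (|B|+1)) C, le_trans (by positivity) (le_max_left _ _), fun x => ?_⟩
  rcases le_or_gt x x0 with h | h
  · exact le_trans (hx0 x h) (le_trans (le_max_right _ _) (le_max_left _ _))
  rcases le_or_gt x1 x with h' | h'
  · exact le_trans (hx1 x h') (le_trans (le_max_left _ _) (le_max_left _ _))
  · exact le_trans (hC x ⟨h.le, h'.le⟩) (le_max_right _ _)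

lemma osc (β φ : ℝ) : ∃ a : ℝ, 1 ≤ a ∧ ∀ b, a ≤ b → ∃ L : ℝ,
    Tendsto (fun T : ℝ => ∫ u in b..T,
      u ^ (-(1:ℝ)/4) * Real.cos ((2/3) * u ^ ((3:ℝ)/2) - β * Real.log u + φ))
      atTop (nhds L) := by
  set θ : ℝ → ℝ := fun u => (2/3) * u ^ ((3:ℝ)/2) - β * Real.log u + φ with hθdef
  set f : ℝ → ℝ := fun u => u ^ (-(1:ℝ)/4) * Real.cos (θ u) with hfdef
  set F : ℝ → ℝ := fun u => u ^ ((3:ℝ)/4) * Real.sin (θ u) / (u ^ ((3:ℝ)/2) - β) with hFdef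
  set r : ℝ → ℝ := fun u =>
    -(3/4) * (u ^ ((5:ℝ)/4) + β * u ^ (-(1:ℝ)/4)) * Real.sin (θ u)
      / (u ^ ((3:ℝ)/2) - β) ^ 2 with hrdef
  refine ⟨max 1 (2*|β|+2), le_max_left _ _, fun b hb => ?_⟩
  have hb1 : (1:ℝ) ≤ b := le_trans (le_max_left _ _) hb
  have hb0 : (0:ℝ) < b := lt_of_lt_of_le one_pos hb1
  have key : ∀ u : ℝ, b ≤ u → (1 ≤ u ∧ 0 < u ∧ 2*|β|+2 ≤ u ^ ((3:ℝ)/2)) := by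
    intro u hu
    have h1 : (1:ℝ) ≤ u := le_trans hb1 hu
    have h0 : (0:ℝ) < u := lt_of_lt_of_le one_pos h1
    refine ⟨h1, h0, ?_⟩
    have h3 : u ^ (1:ℝ) ≤ u ^ ((3:ℝ)/2) := Real.rpow_le_rpow_of_exponent_le h1 (by norm_num)
    rw [Real.rpow_one] at h3
    have h4 : 2*|β|+2 ≤ u := le_trans (le_trans (le_max_right _ _) hb) hu
    linarith
  have hD : ∀ u : ℝ, b ≤ u → |β| + 1 ≤ u ^ ((3:ℝ)/2) - β := by
    intro u hu
    obtain ⟨h1, h0, h2⟩ := key u hu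
    have hβ : β ≤ |β| := le_abs_self β
    linarith
  have hDpos : ∀ u : ℝ, b ≤ u → 0 < u ^ ((3:ℝ)/2) - β := fun u hu =>
    lt_of_lt_of_le (by positivity) (hD u hu)
  have hθ : ∀ u : ℝ, 0 < u → HasDerivAt θ (u ^ ((1:ℝ)/2) - β * u⁻¹) u := by
    intro u hu
    have h1 : HasDerivAt (fun u : ℝ => u ^ ((3:ℝ)/2)) ((3/2) * u ^ ((1:ℝ)/2)) u := by
      have := Real.hasDerivAt_rpow_const (x := u) (p := (3:ℝ)/2) (Or.inl hu.ne')
      convert this using 2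
      norm_num
    have h2 : HasDerivAt (fun u : ℝ => (2/3) * u ^ ((3:ℝ)/2)) (u ^ ((1:ℝ)/2)) u := by
      have := h1.const_mul (2/3 : ℝ)
      exact this.congr_deriv (by ring)
    have h3 : HasDerivAt (fun u : ℝ => β * Real.log u) (β * u⁻¹) u :=
      (Real.hasDerivAt_log hu.ne').const_mul β
    exact ((h2.sub h3).add_const φ)
  have hF : ∀ u : ℝ, b ≤ u → HasDerivAt F (f u + r u) u := by
    intro u hu
    obtain ⟨h1, h0, h2⟩ := key u hu
    have hD2 := hDpos u hu
    have hN : HasDerivAt (fun u : ℝ => u ^ ((3:ℝ)/4) * Real.sin (θ u))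
        ((3/4) * u ^ (-(1:ℝ)/4) * Real.sin (θ u)
          + u ^ ((3:ℝ)/4) * (Real.cos (θ u) * (u ^ ((1:ℝ)/2) - β * u⁻¹))) u := by
      have ha : HasDerivAt (fun u : ℝ => u ^ ((3:ℝ)/4)) ((3/4) * u ^ (-(1:ℝ)/4)) u := by
        have := Real.hasDerivAt_rpow_const (x := u) (p := (3:ℝ)/4) (Or.inl h0.ne')
        convert this using 2
        norm_num
      have hs : HasDerivAt (fun u : ℝ => Real.sin (θ u))
          (Real.cos (θ u) * (u ^ ((1:ℝ)/2) - β * u⁻¹)) u := (hθ u h0).sin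
      exact ha.mul hs
    have hDen : HasDerivAt (fun u : ℝ => u ^ ((3:ℝ)/2) - β) ((3/2) * u ^ ((1:ℝ)/2)) u := by
      have h' := (Real.hasDerivAt_rpow_const (x := u) (p := (3:ℝ)/2)
        (Or.inl h0.ne')).sub_const β
      exact h'.congr_deriv (by norm_num)
    have hdiv := hN.div hDen hD2.ne'
    refine hdiv.congr_deriv ?_
    symm
    set q : ℝ := u ^ ((1:ℝ)/4) with hqdef
    have hq0 : 0 < q := Real.rpow_pos_of_pos h0 _
    have hA : u ^ (-(1:ℝ)/4) = q⁻¹ := by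
      rw [show -(1:ℝ)/4 = -(1/4) by norm_num, Real.rpow_neg h0.le]
    have hB : u ^ ((3:ℝ)/4) = q ^ (3:ℕ) := by
      rw [hqdef, ← Real.rpow_natCast (u ^ ((1:ℝ)/4)) 3, ← Real.rpow_mul h0.le]; norm_num
    have hC : u ^ ((1:ℝ)/2) = q ^ (2:ℕ) := by
      rw [hqdef, ← Real.rpow_natCast (u ^ ((1:ℝ)/4)) 2, ← Real.rpow_mul h0.le]; norm_num
    have hE : u ^ ((5:ℝ)/4) = q ^ (5:ℕ) := by
      rw [hqdef, ← Real.rpow_natCast (u ^ ((1:ℝ)/4)) 5, ← Real.rpow_mul h0.le]; norm_num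
    have hS : u ^ ((3:ℝ)/2) = q ^ (6:ℕ) := by
      rw [hqdef, ← Real.rpow_natCast (u ^ ((1:ℝ)/4)) 6, ← Real.rpow_mul h0.le]; norm_num
    have hu4 : u⁻¹ = (q ^ (4:ℕ))⁻¹ := by
      rw [hqdef, ← Real.rpow_natCast (u ^ ((1:ℝ)/4)) 4, ← Real.rpow_mul h0.le]; norm_num
    have hDq : 0 < q ^ (6:ℕ) - β := by rw [← hS]; exact hD2
    simp only [hfdef, hrdef, hA, hB, hC, hE, hS, hu4]
    field_simp
    ring
  -- continuity
  have hθc : ∀ u : ℝ, 0 < u → ContinuousAt θ u := by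
    intro u h0
    exact ((continuousAt_const.mul (Real.continuousAt_rpow_const u _ (Or.inl h0.ne'))).sub
      (continuousAt_const.mul (Real.continuousAt_log h0.ne'))).add continuousAt_const
  have hfc : ∀ u : ℝ, b ≤ u → ContinuousAt f u := by
    intro u hu
    have h0 : (0:ℝ) < u := lt_of_lt_of_le hb0 hu
    exact (Real.continuousAt_rpow_const u _ (Or.inl h0.ne')).mul
      (Real.continuous_cos.continuousAt.comp (hθc u h0))
  have hrc : ∀ u : ℝ, b ≤ u → ContinuousAt r u := by
    intro u hu
    have h0 : (0:ℝ) < u := lt_of_lt_of_le hb0 hu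
    have hD2 := hDpos u hu
    refine ContinuousAt.div ?_ ?_ (by positivity)
    · exact (continuousAt_const.mul ((Real.continuousAt_rpow_const u _ (Or.inl h0.ne')).add
        (continuousAt_const.mul (Real.continuousAt_rpow_const u _ (Or.inl h0.ne'))))).mul
        (Real.continuous_sin.continuousAt.comp (hθc u h0))
    · exact ((Real.continuousAt_rpow_const u _ (Or.inl h0.ne')).sub continuousAt_const).pow 2
  have hfint : ∀ T, b ≤ T → IntervalIntegrable f volume b T := by
    intro T hT
    refine ContinuousOn.intervalIntegrable ?_
    intro x hx
    rw [uIcc_of_le hT] at hx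
    exact (hfc x hx.1).continuousWithinAt
  have hrint : ∀ T, b ≤ T → IntervalIntegrable r volume b T := by
    intro T hT
    refine ContinuousOn.intervalIntegrable ?_
    intro x hx
    rw [uIcc_of_le hT] at hx
    exact (hrc x hx.1).continuousWithinAt
  have hftc : ∀ T, b ≤ T → ∫ u in b..T, f u = (F T - F b) - ∫ u in b..T, r u := by
    intro T hT
    have h1 : ∫ u in b..T, (f u + r u) = F T - F b := by
      refine integral_eq_sub_of_hasDerivAt (fun x hx => ?_) ((hfint T hT).add (hrint T hT))
      rw [uIcc_of_le hT] at hx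
      exact hF x hx.1
    rw [integral_add (hfint T hT) (hrint T hT)] at h1
    linarith
  -- bound on r
  have hrbound : ∀ u : ℝ, b ≤ u → ‖r u‖ ≤ 3*(1+|β|) * u ^ (-(7:ℝ)/4) := by
    intro u hu
    obtain ⟨h1, h0, h2⟩ := key u hu
    have hD1 := hD u hu
    have hD2 := hDpos u hu
    have hE0 : (0:ℝ) < u ^ ((5:ℝ)/4) := Real.rpow_pos_of_pos h0 _
    have hA0 : (0:ℝ) < u ^ (-(1:ℝ)/4) := Real.rpow_pos_of_pos h0 _
    have hAE : u ^ (-(1:ℝ)/4) ≤ u ^ ((5:ℝ)/4) :=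
      Real.rpow_le_rpow_of_exponent_le h1 (by norm_num)
    have hS2 : (u ^ ((3:ℝ)/2))^(2:ℕ) = u ^ (3:ℝ) := by
      rw [← Real.rpow_natCast (u ^ ((3:ℝ)/2)) 2, ← Real.rpow_mul h0.le]; norm_num
    have hI : u ^ ((5:ℝ)/4) = u ^ (-(7:ℝ)/4) * u ^ (3:ℝ) := by
      rw [← Real.rpow_add h0]; norm_num
    have hDS : u ^ ((3:ℝ)/2) / 2 ≤ u ^ ((3:ℝ)/2) - β := by
      have hβ : β ≤ |β| := le_abs_self β
      linarith
    have hnum : |(-(3/4) * (u ^ ((5:ℝ)/4) + β * u ^ (-(1:ℝ)/4)) * Real.sin (θ u))|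
        ≤ (3/4) * (1 + |β|) * u ^ ((5:ℝ)/4) := by
      rw [abs_mul, abs_mul]
      have h5 : |Real.sin (θ u)| ≤ 1 := Real.abs_sin_le_one _
      have h6 : |(u ^ ((5:ℝ)/4) + β * u ^ (-(1:ℝ)/4))| ≤ (1 + |β|) * u ^ ((5:ℝ)/4) := by
        refine le_trans (abs_add_le _ _) ?_
        rw [abs_of_pos hE0, abs_mul, abs_of_pos hA0]
        have : |β| * u ^ (-(1:ℝ)/4) ≤ |β| * u ^ ((5:ℝ)/4) :=
          mul_le_mul_of_nonneg_left hAE (abs_nonneg β)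
        nlinarith
      have h7 : |(-(3/4):ℝ)| = 3/4 := by norm_num
      rw [h7, mul_assoc]
      have h8 := mul_le_mul h6 h5 (abs_nonneg _)
        (by positivity : (0:ℝ) ≤ (1 + |β|) * u ^ ((5:ℝ)/4))
      calc (3/4:ℝ) * (|(u ^ ((5:ℝ)/4) + β * u ^ (-(1:ℝ)/4))| * |Real.sin (θ u)|)
          ≤ 3/4 * ((1 + |β|) * u ^ ((5:ℝ)/4) * 1) :=
            mul_le_mul_of_nonneg_left h8 (by norm_num)
        _ = (3/4) * (1 + |β|) * u ^ ((5:ℝ)/4) := by ring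
    have hden : u ^ (3:ℝ) / 4 ≤ (u ^ ((3:ℝ)/2) - β) ^ 2 := by
      have h8 : (u ^ ((3:ℝ)/2)/2)^(2:ℕ) ≤ (u ^ ((3:ℝ)/2) - β)^(2:ℕ) :=
        pow_le_pow_left₀ (by positivity) hDS 2
      calc u ^ (3:ℝ) / 4 = (u ^ ((3:ℝ)/2)/2)^(2:ℕ) := by rw [div_pow, hS2]; norm_num
        _ ≤ _ := h8
    have hstep : ‖r u‖ ≤ ((3/4) * (1 + |β|) * u ^ ((5:ℝ)/4)) / (u ^ (3:ℝ) / 4) := by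
      rw [hrdef]
      simp only [Real.norm_eq_abs, abs_div]
      rw [abs_of_pos (by positivity : (0:ℝ) < (u ^ ((3:ℝ)/2) - β) ^ 2)]
      exact div_le_div₀ (by positivity) hnum (by positivity) hden
    refine le_trans hstep (le_of_eq ?_)
    rw [hI]
    have hu3 : u ^ (3:ℝ) ≠ 0 := by positivity
    field_simp
  -- integrability of r on Ioi b
  have hrint' : IntegrableOn r (Ioi b) := by
    have hmaj : IntegrableOn (fun u : ℝ => 3*(1+|β|) * u ^ (-(7:ℝ)/4)) (Ioi b) := by
      have : IntegrableOn (fun u : ℝ => u ^ (-(7:ℝ)/4)) (Ioi b) := by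
        have := integrableOn_Ioi_rpow_of_lt (a := -(7:ℝ)/4) (by norm_num) hb0
        exact this
      exact this.const_mul _
    refine hmaj.integrable.mono' ?_ ?_
    · refine (ContinuousOn.aestronglyMeasurable ?_ measurableSet_Ioi)
      exact fun x hx => (hrc x (le_of_lt hx)).continuousWithinAt
    · refine (ae_restrict_iff' measurableSet_Ioi).2 (ae_of_all _ fun u hu => ?_)
      exact hrbound u (le_of_lt hu)
  have htail : Tendsto (fun T => ∫ u in b..T, r u) atTop (nhds (∫ u in Ioi b, r u)) :=
    intervalIntegral_tendsto_integral_Ioi b hrint' tendsto_id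
  -- F tends to 0
  have hFT : Tendsto F atTop (nhds 0) := by
    have hbnd : ∀ᶠ T in atTop, ‖F T‖ ≤ 2 * T ^ (-(3:ℝ)/4) := by
      filter_upwards [eventually_ge_atTop b] with T hT
      obtain ⟨h1, h0, h2⟩ := key T hT
      have hD2 := hDpos T hT
      have hB0 : (0:ℝ) < T ^ ((3:ℝ)/4) := Real.rpow_pos_of_pos h0 _
      have hS0 : (0:ℝ) < T ^ ((3:ℝ)/2) := Real.rpow_pos_of_pos h0 _
      have hDS : T ^ ((3:ℝ)/2) / 2 ≤ T ^ ((3:ℝ)/2) - β := by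
        have hβ' : β ≤ |β| := le_abs_self β
        linarith
      have hIq : T ^ ((3:ℝ)/4) = T ^ (-(3:ℝ)/4) * T ^ ((3:ℝ)/2) := by
        rw [← Real.rpow_add h0]; norm_num
      have : ‖F T‖ ≤ T ^ ((3:ℝ)/4) / (T ^ ((3:ℝ)/2) / 2) := by
        rw [hFdef]
        simp only [Real.norm_eq_abs, abs_div]
        rw [abs_of_pos hD2, abs_mul, abs_of_pos hB0]
        refine div_le_div₀ (by positivity) ?_ (by positivity) hDS
        exact mul_le_of_le_one_right hB0.le (Real.abs_sin_le_one _)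
      refine le_trans this (le_of_eq ?_)
      rw [hIq]
      field_simp
    have hlim : Tendsto (fun T : ℝ => 2 * T ^ (-(3:ℝ)/4)) atTop (nhds 0) := by
      have h := (tendsto_rpow_neg_atTop (y := (3:ℝ)/4) (by norm_num)).const_mul (2:ℝ)
      rw [mul_zero] at h
      simp only [show -(3:ℝ)/4 = -((3:ℝ)/4) by norm_num]
      exact h
    exact squeeze_zero_norm' hbnd hlim
  refine ⟨(0 - F b) - ∫ u in Ioi b, r u, ?_⟩
  have hmain : Tendsto (fun T => (F T - F b) - ∫ u in b..T, r u) atTop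
      (nhds ((0 - F b) - ∫ u in Ioi b, r u)) := (hFT.sub_const (F b)).sub htail
  refine hmain.congr' ?_
  filter_upwards [eventually_ge_atTop b] with T hT
  exact (hftc T hT).symm

lemma pv_exists (ψ : SchwartzMap ℝ ℝ) :
    ∃ P : ℝ, Tendsto (fun ε : ℝ => ∫ x in {x : ℝ | ε < |x|}, (ψ : ℝ → ℝ) x / x)
      (nhdsWithin 0 (Set.Ioi 0)) (nhds P) := by
  -- bound on the derivative
  obtain ⟨M', hM'⟩ := (SchwartzMap.derivCLM ℝ ℝ ψ).decay 0 0
  have hM'' : ∀ x : ℝ, ‖deriv (ψ : ℝ → ℝ) x‖ ≤ M' := by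
    intro x
    have := hM'.2 x
    simpa [SchwartzMap.derivCLM_apply, norm_iteratedFDeriv_zero] using this
  have hM0 : 0 ≤ M' := le_trans (norm_nonneg _) (hM'' 0)
  have hlip : ∀ x : ℝ, ‖(ψ : ℝ → ℝ) x - ψ 0‖ ≤ M' * ‖x - 0‖ := by
    intro x
    exact convex_univ.norm_image_sub_le_of_norm_deriv_le (fun y _ => ψ.differentiableAt)
      (fun y _ => hM'' y) (mem_univ 0) (mem_univ x)
  set q : ℝ → ℝ := fun x => if |x| ≤ 1 then ((ψ : ℝ → ℝ) x - ψ 0)/x else (ψ : ℝ → ℝ) x / x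
    with hqdef
  have hqmeas : Measurable q := by
    refine Measurable.ite ?_ ?_ ?_
    · exact measurableSet_le (measurable_abs) measurable_const
    · exact ((ψ.continuous.measurable).sub_const _).div measurable_id
    · exact ψ.continuous.measurable.div measurable_id
  have hqbound : ∀ x : ℝ, ‖q x‖ ≤ M' * Set.indicator (Icc (-1:ℝ) 1) (fun _ => (1:ℝ)) x + ‖(ψ : ℝ → ℝ) x‖ := by
    intro x
    rcases le_or_gt |x| 1 with h | h
    · have hmem : x ∈ Icc (-1:ℝ) 1 := abs_le.1 h
      rw [hqdef]
      simp only [if_pos h, Set.indicator_of_mem hmem]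
      rcases eq_or_ne x 0 with rfl | hx0
      · simp only [sub_self, zero_div, norm_zero]
        positivity
      · rw [norm_div]
        simp only [Real.norm_eq_abs]
        have h1 : |(ψ : ℝ → ℝ) x - ψ 0| / |x| ≤ M' := by
          rw [div_le_iff₀ (abs_pos.2 hx0)]
          have := hlip x
          simpa [Real.norm_eq_abs] using this
        have := abs_nonneg ((ψ : ℝ → ℝ) x)
        linarith [h1]
    · rw [hqdef]
      simp only [if_neg (not_le.2 h)]
      have h1 : ‖(ψ : ℝ → ℝ) x / x‖ ≤ ‖(ψ : ℝ → ℝ) x‖ := by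
        rw [norm_div]
        simp only [Real.norm_eq_abs]
        rw [div_le_iff₀ (lt_trans one_pos h)]
        nlinarith [abs_nonneg ((ψ : ℝ → ℝ) x)]
      have h2 : (0:ℝ) ≤ M' * Set.indicator (Icc (-1:ℝ) 1) (fun _ => (1:ℝ)) x := by
        apply mul_nonneg hM0
        exact Set.indicator_nonneg (fun _ _ => zero_le_one) x
      linarith
  have hbint : Integrable (fun x : ℝ => M' * Set.indicator (Icc (-1:ℝ) 1) (fun _ => (1:ℝ)) x + ‖(ψ : ℝ → ℝ) x‖) := by
    refine Integrable.add ?_ ψ.integrable.norm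
    refine Integrable.const_mul ?_ _
    rw [integrable_indicator_iff measurableSet_Icc]
    exact integrableOn_const (by simp [Real.volume_Icc])
  have hqint : Integrable q := by
    refine hbint.mono' hqmeas.aestronglyMeasurable (ae_of_all _ hqbound)
  have hSmeas : ∀ ε : ℝ, MeasurableSet {x : ℝ | ε < |x|} := by
    intro ε
    exact measurableSet_lt measurable_const measurable_abs
  -- key identity
  have hkey : ∀ ε : ℝ, ε ∈ Ioo (0:ℝ) 1 →
      ∫ x in {x : ℝ | ε < |x|}, (ψ : ℝ → ℝ) x / x = ∫ x in {x : ℝ | ε < |x|}, q x := by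
    intro ε hε
    obtain ⟨hε0, hε1⟩ := hε
    have hψx_int : IntegrableOn (fun x => (ψ : ℝ → ℝ) x / x) {x : ℝ | ε < |x|} := by
      refine Integrable.mono' (ψ.integrable.norm.const_mul (1/ε)).restrict
        ((ψ.continuous.measurable.div measurable_id).aestronglyMeasurable.restrict) ?_
      refine (ae_restrict_iff' (hSmeas ε)).2 (ae_of_all _ fun x hx => ?_)
      have hx : ε < |x| := hx
      rw [norm_div]
      simp only [Real.norm_eq_abs]
      rw [div_le_iff₀ (lt_trans hε0 hx)]
      calc |(ψ : ℝ → ℝ) x| ≤ 1/ε * |(ψ : ℝ → ℝ) x| * |x| := by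
            rw [div_mul_eq_mul_div, one_mul, div_mul_eq_mul_div, le_div_iff₀ hε0]
            nlinarith [hx, hε0, abs_nonneg ((ψ : ℝ → ℝ) x)]
        _ = 1/ε * ‖(ψ : ℝ → ℝ) x‖ * |x| := by simp [Real.norm_eq_abs]
    have hqS : IntegrableOn q {x : ℝ | ε < |x|} := hqint.integrableOn
    have hdiff : ∀ x : ℝ, (ψ : ℝ → ℝ) x / x - q x
        = Set.indicator {x : ℝ | |x| ≤ 1} (fun x => ψ 0 / x) x := by
      intro x
      rcases le_or_gt |x| 1 with h | h
      · rw [hqdef]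
        simp only [if_pos h, Set.indicator_of_mem (show x ∈ {x : ℝ | |x| ≤ 1} from h)]
        rw [div_sub_div_same]
        ring_nf
      · rw [hqdef]
        simp only [if_neg (not_le.2 h),
          Set.indicator_of_notMem (show x ∉ {x : ℝ | |x| ≤ 1} from not_le.2 h)]
        ring
    have hzero : ∫ x in {x : ℝ | ε < |x|},
        Set.indicator {x : ℝ | |x| ≤ 1} (fun x => ψ 0 / x) x = 0 := by
      rw [setIntegral_indicator (measurableSet_le measurable_abs measurable_const)]
      have hseteq : {x : ℝ | ε < |x|} ∩ {x : ℝ | |x| ≤ 1} = Ico (-1:ℝ) (-ε) ∪ Ioc ε 1 := by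
        ext x
        simp only [mem_inter_iff, mem_setOf_eq, mem_union, mem_Ico, mem_Ioc, lt_abs, abs_le]
        constructor
        · rintro ⟨h1 | h1, h2, h3⟩
          · exact Or.inr ⟨h1, h3⟩
          · exact Or.inl ⟨h2, by linarith⟩
        · rintro (⟨h1, h2⟩ | ⟨h1, h2⟩)
          · exact ⟨Or.inr (by linarith), h1, by nlinarith [hε0, hε1]⟩
          · exact ⟨Or.inl h1, by nlinarith [hε0, hε1], h2⟩
      rw [hseteq]
      have hdisj : Disjoint (Ico (-1:ℝ) (-ε)) (Ioc ε 1) := by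
        rw [Set.disjoint_left]
        intro x h1 h2
        simp only [mem_Ico, mem_Ioc] at h1 h2
        linarith [hε0]
      have hint1 : IntegrableOn (fun x : ℝ => ψ 0 / x) (Ico (-1:ℝ) (-ε)) := by
        refine IntegrableOn.mono_set ?_ Ico_subset_Icc_self
        refine ContinuousOn.integrableOn_compact isCompact_Icc ?_
        exact ContinuousOn.div continuousOn_const continuousOn_id
          (fun x hx => by rcases hx with ⟨h1, h2⟩; intro h; rw [h] at h2; linarith [hε0])
      have hint2 : IntegrableOn (fun x : ℝ => ψ 0 / x) (Ioc ε 1) := by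
        refine IntegrableOn.mono_set ?_ Ioc_subset_Icc_self
        refine ContinuousOn.integrableOn_compact isCompact_Icc ?_
        exact ContinuousOn.div continuousOn_const continuousOn_id
          (fun x hx => by rcases hx with ⟨h1, h2⟩; intro h; rw [h] at h1; linarith [hε0])
      rw [setIntegral_union hdisj measurableSet_Ioc hint1 hint2]
      rw [setIntegral_congr_set Ico_ae_eq_Ioc]
      rw [← intervalIntegral.integral_of_le (by linarith [hε0] : (-1:ℝ) ≤ -ε),
        ← intervalIntegral.integral_of_le hε1.le]
      have e1 : ∫ x in (-1:ℝ)..(-ε), ψ 0 / x = ψ 0 * Real.log ε := by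
        have h0 : (0:ℝ) ∉ Set.uIcc (-1:ℝ) (-ε) := by
          rw [Set.uIcc_of_le (by linarith [hε0])]
          intro h
          rcases h with ⟨_, h2⟩
          linarith [hε0]
        simp only [show ∀ y : ℝ, ψ 0 / y = ψ 0 * (1/y) from fun y => by rw [mul_one_div]]
        rw [intervalIntegral.integral_const_mul, integral_one_div h0]
        congr 1
        rw [show (-ε)/(-1:ℝ) = ε by ring]
      have e2 : ∫ x in ε..(1:ℝ), ψ 0 / x = ψ 0 * (- Real.log ε) := by
        have h0 : (0:ℝ) ∉ Set.uIcc ε (1:ℝ) := by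
          rw [Set.uIcc_of_le hε1.le]
          intro h
          rcases h with ⟨h1, _⟩
          linarith [hε0]
        simp only [show ∀ y : ℝ, ψ 0 / y = ψ 0 * (1/y) from fun y => by rw [mul_one_div]]
        rw [intervalIntegral.integral_const_mul, integral_one_div h0]
        rw [show (1:ℝ)/ε = ε⁻¹ by rw [one_div], Real.log_inv]
      rw [e1, e2]
      ring
    have : ∫ x in {x : ℝ | ε < |x|}, ((ψ : ℝ → ℝ) x / x - q x) = 0 := by
      rw [setIntegral_congr_fun (hSmeas ε) (fun x _ => hdiff x)] at *
      exact hzero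
    have hsub := integral_sub hψx_int hqS
    rw [this] at hsub
    linarith [hsub]
  refine ⟨∫ x, q x, ?_⟩
  have htend : Tendsto (fun ε : ℝ => ∫ x in {x : ℝ | ε < |x|}, q x)
      (nhdsWithin 0 (Set.Ioi 0)) (nhds (∫ x, q x)) := by
    simp_rw [← MeasureTheory.integral_indicator (hSmeas _)]
    refine tendsto_integral_filter_of_dominated_convergence (fun x => ‖q x‖) ?_ ?_ hqint.norm ?_
    · exact Eventually.of_forall fun ε =>
        (hqmeas.indicator (hSmeas ε)).aestronglyMeasurable
    · exact Eventually.of_forall fun ε => ae_of_all _ fun x => norm_indicator_le_norm_self q x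
    · have hne : ∀ᵐ x : ℝ, x ≠ 0 := by
        rw [ae_iff]
        have : {x : ℝ | ¬ x ≠ 0} = {0} := by ext x; simp
        rw [this]
        simp
      filter_upwards [hne] with x hx
      have hev : ∀ᶠ ε in nhdsWithin (0:ℝ) (Set.Ioi 0),
          Set.indicator {x : ℝ | ε < |x|} q x = q x := by
        have hmem : Set.Ioo (0:ℝ) |x| ∈ nhdsWithin (0:ℝ) (Set.Ioi 0) :=
          Ioo_mem_nhdsGT_of_mem ⟨le_refl 0, abs_pos.2 hx⟩
        filter_upwards [hmem] with ε hε
        exact Set.indicator_of_mem (show x ∈ {x : ℝ | ε < |x|} from hε.2) q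
      exact Tendsto.congr' (hev.mono fun ε h => h.symm) tendsto_const_nhds
  refine htend.congr' ?_
  filter_upwards [Ioo_mem_nhdsGT_of_mem (Set.left_mem_Ico.2 one_pos)] with ε hε
  exact (hkey ε hε).symm

set_option maxHeartbeats 2000000 in
/-- If `v` is continuous with `v(x) = α/x + O(x⁻⁴)` as `x → +∞` and
`v(x) = d(-x)^{-1/4}cos((2/3)(-x)^{3/2} - (3/4)d² ln(-x) + φ) + α/x + O((-x)^{-7/4})`
as `x → -∞`, then the principal value `c = lim ∫_{-y}^y v` exists and
`t^{-1/3} v(x t^{-1/3}) → c δ + α p.v.(1/x)` in `𝒮'(ℝ)` as `t → 0⁺`. -/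
theorem selfsimilar_distributional_limit (α d φ : ℝ) (v : ℝ → ℝ) (hv : Continuous v)
    (hplus : (fun x : ℝ => v x - α / x) =O[atTop] fun x : ℝ => x ^ (-(4:ℝ)))
    (hminus : (fun x : ℝ => v x
        - d * (-x) ^ (-(1:ℝ)/4) *
            Real.cos ((2/3) * (-x) ^ ((3:ℝ)/2) - (3/4) * d^2 * Real.log (-x) + φ)
        - α / x)
      =O[atBot] fun x : ℝ => (-x) ^ (-(7:ℝ)/4)) :
    ∃ c : ℝ,
      Tendsto (fun y : ℝ => ∫ x in (-y)..y, v x) atTop (nhds c) ∧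
      ∀ ψ : SchwartzMap ℝ ℝ, ∃ P : ℝ,
        Tendsto (fun ε : ℝ => ∫ x in {x : ℝ | ε < |x|}, ψ x / x)
          (nhdsWithin 0 (Set.Ioi 0)) (nhds P) ∧
        Tendsto (fun t : ℝ => ∫ x : ℝ, t ^ (-(1:ℝ)/3) * v (x * t ^ (-(1:ℝ)/3)) * ψ x)
          (nhdsWithin 0 (Set.Ioi 0)) (nhds (c * ψ 0 + α * P)) := by
  obtain ⟨a₀, ha₀1, hosc⟩ := osc ((3/4)*d^2) φ
  -- the regularizing kernel k
  set k : ℝ → ℝ := fun y => y / max 1 (y^2) with hkdef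
  have hmax_pos : ∀ y : ℝ, (0:ℝ) < max 1 (y^2) :=
    fun y => lt_of_lt_of_le one_pos (le_max_left _ _)
  have hkcont : Continuous k :=
    continuous_id.div (continuous_const.max (continuous_pow 2)) (fun y => (hmax_pos y).ne')
  have hk_big : ∀ y : ℝ, 1 ≤ |y| → k y = 1/y := by
    intro y hy
    have hy2 : (1:ℝ) ≤ y^2 := by nlinarith [sq_abs y, abs_nonneg y]
    have hy0 : y ≠ 0 := by
      intro h
      rw [h, abs_zero] at hy
      linarith
    show y / max 1 (y^2) = 1/y
    rw [max_eq_right hy2, sq]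
    field_simp
  have hk_small : ∀ y : ℝ, |y| ≤ 1 → k y = y := by
    intro y hy
    have hy2 : y^2 ≤ 1 := by nlinarith [sq_abs y, abs_nonneg y]
    show y / max 1 (y^2) = y
    rw [max_eq_left hy2, div_one]
  have hk_bdd : ∀ y : ℝ, |k y| ≤ 1 := by
    intro y
    rcases le_or_gt |y| 1 with h | h
    · rw [hk_small y h]; exact h
    · rw [hk_big y h.le, abs_div, abs_one]
      rw [div_le_one (lt_trans one_pos h)]
      exact h.le
  have hkodd : ∀ y : ℝ, k (-y) = - k y := by
    intro y
    show (-y) / max 1 ((-y)^2) = -(y / max 1 (y^2))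
    rw [show (-y)^2 = y^2 by ring, neg_div]
  set w : ℝ → ℝ := fun x => v x - α * k x with hwdef
  have hwcont : Continuous w := hv.sub (continuous_const.mul hkcont)
  -- limits of v at ±∞
  have hx4 : Tendsto (fun x : ℝ => x ^ (-(4:ℝ))) atTop (nhds 0) := by
    have := tendsto_rpow_neg_atTop (y := (4:ℝ)) (by norm_num)
    simpa using this
  have hdivtop : Tendsto (fun x : ℝ => α / x) atTop (nhds 0) := by
    simpa [div_eq_mul_inv] using tendsto_inv_atTop_zero.const_mul α
  have hvtop : Tendsto v atTop (nhds 0) := by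
    have h1 : Tendsto (fun x : ℝ => v x - α / x) atTop (nhds 0) :=
      hplus.trans_tendsto hx4
    have h2 := h1.add hdivtop
    rw [add_zero] at h2
    exact h2.congr fun x => by ring
  have hkeyneg : ∀ q : ℝ, q < 0 → Tendsto (fun x : ℝ => (-x) ^ q) atBot (nhds 0) := by
    intro q hq
    have h1 : Tendsto (fun u : ℝ => u ^ q) atTop (nhds 0) := by
      have := tendsto_rpow_neg_atTop (y := -q) (by linarith)
      rwa [neg_neg] at this
    exact h1.comp tendsto_neg_atBot_atTop
  have hx74 : Tendsto (fun x : ℝ => (-x) ^ (-(7:ℝ)/4)) atBot (nhds 0) :=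
    hkeyneg _ (by norm_num)
  have hgbot : Tendsto (fun x : ℝ => d * (-x) ^ (-(1:ℝ)/4) *
      Real.cos ((2/3) * (-x) ^ ((3:ℝ)/2) - (3/4) * d^2 * Real.log (-x) + φ)) atBot (nhds 0) := by
    have hb : ∀ᶠ x : ℝ in atBot, ‖d * (-x) ^ (-(1:ℝ)/4) *
        Real.cos ((2/3) * (-x) ^ ((3:ℝ)/2) - (3/4) * d^2 * Real.log (-x) + φ)‖
        ≤ |d| * (-x) ^ (-(1:ℝ)/4) := by
      filter_upwards [eventually_le_atBot (-1:ℝ)] with x hx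
      have hpos : (0:ℝ) < -x := by linarith
      rw [norm_mul, norm_mul]
      simp only [Real.norm_eq_abs]
      have h1 : |(-x) ^ (-(1:ℝ)/4)| = (-x) ^ (-(1:ℝ)/4) :=
        abs_of_pos (Real.rpow_pos_of_pos hpos _)
      rw [h1]
      have h2 := Real.abs_cos_le_one ((2/3) * (-x) ^ ((3:ℝ)/2) - (3/4) * d^2 * Real.log (-x) + φ)
      have h3 : (0:ℝ) ≤ |d| * (-x) ^ (-(1:ℝ)/4) := by positivity
      calc |d| * (-x) ^ (-(1:ℝ)/4) * |Real.cos ((2/3) * (-x) ^ ((3:ℝ)/2) - (3/4) * d^2 * Real.log (-x) + φ)|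
          ≤ |d| * (-x) ^ (-(1:ℝ)/4) * 1 := mul_le_mul_of_nonneg_left h2 h3
        _ = |d| * (-x) ^ (-(1:ℝ)/4) := mul_one _
    have hlim : Tendsto (fun x : ℝ => |d| * (-x) ^ (-(1:ℝ)/4)) atBot (nhds 0) := by
      have h2 := (hkeyneg (-(1:ℝ)/4) (by norm_num)).const_mul |d|
      rwa [mul_zero] at h2
    exact squeeze_zero_norm' hb hlim
  have hdivbot : Tendsto (fun x : ℝ => α / x) atBot (nhds 0) := by
    have h1 := (hdivtop.comp tendsto_neg_atBot_atTop).neg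
    rw [neg_zero] at h1
    exact h1.congr fun x => by
      show -(α / -x) = α / x
      rw [div_neg, neg_neg]
  have hvbot : Tendsto v atBot (nhds 0) := by
    have h1 : Tendsto (fun x : ℝ => v x
        - d * (-x) ^ (-(1:ℝ)/4) *
            Real.cos ((2/3) * (-x) ^ ((3:ℝ)/2) - (3/4) * d^2 * Real.log (-x) + φ)
        - α / x) atBot (nhds 0) := hminus.trans_tendsto hx74
    have h2 := (h1.add hgbot).add hdivbot
    rw [add_zero, add_zero] at h2
    exact h2.congr fun x => by ring
  obtain ⟨Mv, hMv0, hMv⟩ := bdd_of_tendsto hv hvtop hvbot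
  have hwbdd : ∀ x : ℝ, |w x| ≤ Mv + |α| := by
    intro x
    have h1 : |w x| ≤ |v x| + |α * k x| := abs_sub _ _
    have h2 : |α * k x| ≤ |α| := by
      rw [abs_mul]
      nlinarith [hk_bdd x, abs_nonneg α, abs_nonneg (k x)]
    linarith [hMv x]
  -- positive side integrability
  have hwpos : IntegrableOn w (Ioi 0) := by
    obtain ⟨C₁, hC₁⟩ := Asymptotics.isBigO_iff.1 hplus
    obtain ⟨A₁, hA₁⟩ := eventually_atTop.1 hC₁
    set b₁ : ℝ := max 1 A₁ with hb₁def
    have hb₁0 : (0:ℝ) < b₁ := lt_of_lt_of_le one_pos (le_max_left _ _)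
    have h1 : IntegrableOn w (Ioi b₁) := by
      have hmaj : IntegrableOn (fun x : ℝ => |C₁| * x ^ (-(4:ℝ))) (Ioi b₁) := by
        have h0 : IntegrableOn (fun x : ℝ => x ^ (-(4:ℝ))) (Ioi b₁) :=
          integrableOn_Ioi_rpow_of_lt (by norm_num) hb₁0
        exact h0.const_mul _
      refine hmaj.integrable.mono' hwcont.aestronglyMeasurable.restrict ?_
      refine (ae_restrict_iff' measurableSet_Ioi).2 (ae_of_all _ fun x hx => ?_)
      have hx' : b₁ < x := hx
      have hx1 : 1 < x := lt_of_le_of_lt (le_max_left 1 A₁) hx'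
      have hxA : A₁ ≤ x := le_of_lt (lt_of_le_of_lt (le_max_right 1 A₁) hx')
      have hkx : k x = 1/x := hk_big x (by rw [abs_of_pos (by linarith)]; linarith)
      have hwx : w x = v x - α / x := by
        show v x - α * k x = v x - α / x
        rw [hkx, mul_one_div]
      rw [Real.norm_eq_abs, hwx]
      have hb := hA₁ x hxA
      rw [Real.norm_eq_abs, Real.norm_eq_abs] at hb
      have habs : |x ^ (-(4:ℝ))| = x ^ (-(4:ℝ)) :=
        abs_of_pos (Real.rpow_pos_of_pos (by linarith) _)
      rw [habs] at hb
      calc |v x - α/x| ≤ C₁ * x ^ (-(4:ℝ)) := hb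
        _ ≤ |C₁| * x ^ (-(4:ℝ)) := by
            have h5 := le_abs_self C₁
            nlinarith [Real.rpow_pos_of_pos (show (0:ℝ) < x by linarith) (-(4:ℝ))]
    have h2 : IntegrableOn w (Ioc 0 b₁) :=
      (hwcont.integrableOn_Icc (a := 0) (b := b₁)).mono_set Ioc_subset_Icc_self
    have hsub : Ioi (0:ℝ) ⊆ Ioc 0 b₁ ∪ Ioi b₁ := by
      intro x hx
      rcases le_or_gt x b₁ with h | h
      · exact Or.inl ⟨hx, h⟩
      · exact Or.inr h
    exact (h2.union h1).mono_set hsub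
  -- negative side: convergence of ∫_{-T}^0 w
  have hneg : ∃ m : ℝ, Tendsto (fun T : ℝ => ∫ x in (-T)..(0:ℝ), w x) atTop (nhds m) := by
    obtain ⟨C₂, hC₂⟩ := Asymptotics.isBigO_iff.1 hminus
    obtain ⟨A₂, hA₂⟩ := eventually_atBot.1 hC₂
    set b₂ : ℝ := max a₀ (max 1 (-A₂ + 1)) with hb₂def
    have hb₂a : a₀ ≤ b₂ := le_max_left _ _
    have hb₂1 : (1:ℝ) ≤ b₂ := le_trans (le_max_left _ _) (le_max_right _ _)
    have hb₂0 : (0:ℝ) < b₂ := lt_of_lt_of_le one_pos hb₂1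
    have hb₂A : -b₂ ≤ A₂ := by
      have h := le_trans (le_max_right 1 (-A₂ + 1)) (le_max_right a₀ (max 1 (-A₂ + 1)))
      rw [← hb₂def] at h
      linarith
    obtain ⟨L, hL⟩ := hosc b₂ hb₂a
    set fosc : ℝ → ℝ := fun u => u ^ (-(1:ℝ)/4) *
      Real.cos ((2/3) * u ^ ((3:ℝ)/2) - ((3/4)*d^2) * Real.log u + φ) with hfoscdef
    set ρ : ℝ → ℝ := fun u => w (-u) - d * fosc u with hρdef
    have hρeq : ∀ u : ℝ, 1 ≤ u → ρ u = v (-u)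
        - d * (-(-u)) ^ (-(1:ℝ)/4) *
            Real.cos ((2/3) * (-(-u)) ^ ((3:ℝ)/2) - (3/4) * d^2 * Real.log (-(-u)) + φ)
        - α / (-u) := by
      intro u hu
      have hku : k (-u) = 1/(-u) := by
        refine hk_big (-u) ?_
        rw [abs_neg, abs_of_pos (by linarith)]
        exact hu
      show (v (-u) - α * k (-u)) - d * fosc u = _
      rw [hku, mul_one_div, neg_neg, hfoscdef]
      ring
    -- continuity of fosc and ρ near the relevant region
    have hfosccont : ∀ u : ℝ, 0 < u → ContinuousAt fosc u := by
      intro u h0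
      exact (Real.continuousAt_rpow_const u _ (Or.inl h0.ne')).mul
        (Real.continuous_cos.continuousAt.comp
          (((continuousAt_const.mul (Real.continuousAt_rpow_const u _ (Or.inl h0.ne'))).sub
            (continuousAt_const.mul (Real.continuousAt_log h0.ne'))).add continuousAt_const))
    have hρcont : ∀ u : ℝ, 0 < u → ContinuousAt ρ u := by
      intro u h0
      exact ((hwcont.comp continuous_neg).continuousAt).sub
        (continuousAt_const.mul (hfosccont u h0))
    have hρbound : ∀ u : ℝ, b₂ ≤ u → ‖ρ u‖ ≤ |C₂| * u ^ (-(7:ℝ)/4) := by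
      intro u hu
      have hu1 : (1:ℝ) ≤ u := le_trans hb₂1 hu
      have hu0 : (0:ℝ) < u := lt_of_lt_of_le one_pos hu1
      have hxA : -u ≤ A₂ := by linarith [le_trans (neg_le_neg hu) hb₂A]
      have hb := hA₂ (-u) hxA
      rw [hρeq u hu1]
      simp only [Real.norm_eq_abs, neg_neg] at hb ⊢
      have habs : |u ^ (-(7:ℝ)/4)| = u ^ (-(7:ℝ)/4) :=
        abs_of_pos (Real.rpow_pos_of_pos hu0 _)
      rw [habs] at hb
      calc |v (-u) - d * u ^ (-(1:ℝ)/4) *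
            Real.cos ((2/3) * u ^ ((3:ℝ)/2) - (3/4) * d^2 * Real.log u + φ) - α / (-u)|
          ≤ C₂ * u ^ (-(7:ℝ)/4) := hb
        _ ≤ |C₂| * u ^ (-(7:ℝ)/4) := by
            have h5 := le_abs_self C₂
            nlinarith [Real.rpow_pos_of_pos hu0 (-(7:ℝ)/4)]
    have hρint : IntegrableOn ρ (Ioi b₂) := by
      have hmaj : IntegrableOn (fun u : ℝ => |C₂| * u ^ (-(7:ℝ)/4)) (Ioi b₂) := by
        have h0 : IntegrableOn (fun u : ℝ => u ^ (-(7:ℝ)/4)) (Ioi b₂) :=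
          integrableOn_Ioi_rpow_of_lt (by norm_num) hb₂0
        exact h0.const_mul _
      refine hmaj.integrable.mono' ?_ ?_
      · refine (ContinuousOn.aestronglyMeasurable ?_ measurableSet_Ioi)
        exact fun u hu => (hρcont u (lt_trans hb₂0 hu)).continuousWithinAt
      · exact (ae_restrict_iff' measurableSet_Ioi).2 (ae_of_all _ fun u hu => hρbound u (le_of_lt hu))
    have hρtail : Tendsto (fun T : ℝ => ∫ u in b₂..T, ρ u) atTop
        (nhds (∫ u in Ioi b₂, ρ u)) := intervalIntegral_tendsto_integral_Ioi b₂ hρint tendsto_id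
    have hfosc_ii : ∀ T : ℝ, b₂ ≤ T → IntervalIntegrable fosc volume b₂ T := by
      intro T hT
      refine ContinuousOn.intervalIntegrable ?_
      intro x hx
      rw [uIcc_of_le hT] at hx
      exact (hfosccont x (lt_of_lt_of_le hb₂0 hx.1)).continuousWithinAt
    have hρ_ii : ∀ T : ℝ, b₂ ≤ T → IntervalIntegrable ρ volume b₂ T := by
      intro T hT
      refine ContinuousOn.intervalIntegrable ?_
      intro x hx
      rw [uIcc_of_le hT] at hx
      exact (hρcont x (lt_of_lt_of_le hb₂0 hx.1)).continuousWithinAt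
    have hkey : ∀ T : ℝ, b₂ ≤ T → ∫ x in (-T)..(0:ℝ), w x
        = ((d * ∫ u in b₂..T, fosc u) + ∫ u in b₂..T, ρ u) + ∫ x in (-b₂)..(0:ℝ), w x := by
      intro T hT
      have h1 : ∫ x in (-T)..(0:ℝ), w x
          = (∫ x in (-T)..(-b₂), w x) + ∫ x in (-b₂)..(0:ℝ), w x :=
        (intervalIntegral.integral_add_adjacent_intervals (hwcont.intervalIntegrable _ _)
          (hwcont.intervalIntegrable _ _)).symm
      have h2 : ∫ u in b₂..T, w (-u) = ∫ x in (-T)..(-b₂), w x :=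
        intervalIntegral.integral_comp_neg (a := b₂) (b := T) w
      have h3 : ∫ u in b₂..T, w (-u)
          = (∫ u in b₂..T, d * fosc u) + ∫ u in b₂..T, ρ u := by
        have hpt : ∀ u ∈ Set.uIcc b₂ T, w (-u) = d * fosc u + ρ u := by
          intro u _
          rw [hρdef]
          ring
        rw [intervalIntegral.integral_congr hpt]
        exact intervalIntegral.integral_add ((hfosc_ii T hT).const_mul d) (hρ_ii T hT)
      rw [h1, ← h2, h3, intervalIntegral.integral_const_mul]
    refine ⟨((d * L) + ∫ u in Ioi b₂, ρ u) + ∫ x in (-b₂)..(0:ℝ), w x, ?_⟩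
    have hcomb : Tendsto (fun T : ℝ => ((d * ∫ u in b₂..T, fosc u) + ∫ u in b₂..T, ρ u)
        + ∫ x in (-b₂)..(0:ℝ), w x) atTop
        (nhds (((d * L) + ∫ u in Ioi b₂, ρ u) + ∫ x in (-b₂)..(0:ℝ), w x)) :=
      ((hL.const_mul d).add hρtail).add_const _
    refine hcomb.congr' ?_
    filter_upwards [eventually_ge_atTop b₂] with T hT
    exact (hkey T hT).symm
  obtain ⟨m, hm⟩ := hneg
  have hIw : Tendsto (fun T : ℝ => ∫ x in (0:ℝ)..T, w x) atTop (nhds (∫ x in Ioi 0, w x)) :=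
    intervalIntegral_tendsto_integral_Ioi 0 hwpos tendsto_id
  set c : ℝ := m + ∫ x in Ioi 0, w x with hcdef
  have hk0 : ∀ y : ℝ, (∫ x in (-y)..y, k x) = 0 := by
    intro y
    have h1 : ∫ x in (-y)..y, k (-x) = ∫ x in (-y)..y, k x := by
      rw [intervalIntegral.integral_comp_neg (a := -y) (b := y) k, neg_neg]
    have h2 : ∫ x in (-y)..y, k (-x) = - ∫ x in (-y)..y, k x := by
      simp only [hkodd]
      exact intervalIntegral.integral_neg
    linarith [h1, h2]
  have hsplit : ∀ y : ℝ, ∫ x in (-y)..y, v x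
      = (∫ x in (-y)..(0:ℝ), w x) + ∫ x in (0:ℝ)..y, w x := by
    intro y
    have h1 : ∀ x ∈ Set.uIcc (-y) y, v x = w x + α * k x := by
      intro x _
      show v x = (v x - α * k x) + α * k x
      ring
    rw [intervalIntegral.integral_congr h1,
      intervalIntegral.integral_add (hwcont.intervalIntegrable _ _)
        ((show Continuous fun x => α * k x from continuous_const.mul hkcont).intervalIntegrable _ _),
      intervalIntegral.integral_const_mul, hk0, mul_zero, add_zero,
      ← intervalIntegral.integral_add_adjacent_intervals (hwcont.intervalIntegrable (-y) 0)
        (hwcont.intervalIntegrable 0 y)]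
  have hconj1 : Tendsto (fun y : ℝ => ∫ x in (-y)..y, v x) atTop (nhds c) := by
    have h := hm.add hIw
    rw [← hcdef] at h
    exact h.congr fun y => (hsplit y).symm
  refine ⟨c, hconj1, fun ψ => ?_⟩
  obtain ⟨P, hP⟩ := pv_exists ψ
  refine ⟨P, hP, ?_⟩
  -- the primitive W
  set W : ℝ → ℝ := fun y => m + ∫ x in (0:ℝ)..y, w x with hWdef
  have hWderiv : ∀ y : ℝ, HasDerivAt W (w y) y := by
    intro y
    have h := intervalIntegral.integral_hasDerivAt_right (hwcont.intervalIntegrable 0 y)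
      hwcont.aestronglyMeasurable.stronglyMeasurableAtFilter hwcont.continuousAt
    exact h.const_add m
  have hWcont : Continuous W := continuous_iff_continuousAt.2 fun y => (hWderiv y).continuousAt
  have hWtop : Tendsto W atTop (nhds c) := by
    rw [hcdef]
    exact tendsto_const_nhds.add hIw
  have hWbot : Tendsto W atBot (nhds 0) := by
    have h1 : Tendsto (fun y : ℝ => ∫ x in (-(-y))..(0:ℝ), w x) atBot (nhds m) :=
      hm.comp tendsto_neg_atBot_atTop
    have h2 : Tendsto (fun y : ℝ => ∫ x in y..(0:ℝ), w x) atBot (nhds m) := by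
      simpa [neg_neg] using h1
    have h3 : Tendsto (fun y : ℝ => m + (- ∫ x in y..(0:ℝ), w x)) atBot (nhds (m + -m)) :=
      tendsto_const_nhds.add h2.neg
    rw [add_neg_cancel] at h3
    refine h3.congr fun y => ?_
    show m + - ∫ x in y..(0:ℝ), w x = m + ∫ x in (0:ℝ)..y, w x
    rw [intervalIntegral.integral_symm y 0]
  obtain ⟨MW, hMW0, hMW⟩ := bdd_of_tendsto hWcont hWtop hWbot
  -- Schwartz facts
  set ψ' : ℝ → ℝ := fun x => deriv (ψ : ℝ → ℝ) x with hψ'def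
  have hψ'eq : (fun x => (SchwartzMap.derivCLM ℝ ℝ ψ) x) = ψ' := by
    funext x
    exact SchwartzMap.derivCLM_apply ℝ ψ x
  have hψ'int : Integrable ψ' := hψ'eq ▸ (SchwartzMap.derivCLM ℝ ℝ ψ).integrable
  have hψ'cont : Continuous ψ' := hψ'eq ▸ (SchwartzMap.derivCLM ℝ ℝ ψ).continuous
  have hψderiv : ∀ x : ℝ, HasDerivAt (ψ : ℝ → ℝ) (ψ' x) x :=
    fun x => ψ.differentiableAt.hasDerivAt
  obtain ⟨Cψ, hCψpos, hCψ⟩ := ψ.decay 0 0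
  have hCψ' : ∀ x : ℝ, ‖(ψ : ℝ → ℝ) x‖ ≤ Cψ := by
    intro x
    have := hCψ x
    simpa [norm_iteratedFDeriv_zero] using this
  have hψcocompact : Tendsto (fun x : ℝ => (ψ : ℝ → ℝ) x) (Filter.cocompact ℝ) (nhds 0) := by
    have h := ψ.toZeroAtInfty.zero_at_infty'
    refine h.congr fun x => ?_
    exact SchwartzMap.toZeroAtInfty_apply ψ x
  have hψtop : Tendsto (fun x : ℝ => (ψ : ℝ → ℝ) x) atTop (nhds 0) :=
    hψcocompact.mono_left (by rw [cocompact_eq_atBot_atTop]; exact le_sup_right)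
  have hψbot : Tendsto (fun x : ℝ => (ψ : ℝ → ℝ) x) atBot (nhds 0) :=
    hψcocompact.mono_left (by rw [cocompact_eq_atBot_atTop]; exact le_sup_left)
  -- the split kernels
  set k1 : ℝ → ℝ := fun y => if |y| ≤ 1 then y else 0 with hk1def
  set k2 : ℝ → ℝ := fun y => if 1 < |y| then 1/y else 0 with hk2def
  have hksplit : ∀ y : ℝ, k y = k1 y + k2 y := by
    intro y
    rcases le_or_gt |y| 1 with h | h
    · rw [hk_small y h]
      show y = (if |y| ≤ 1 then y else 0) + (if 1 < |y| then 1/y else 0)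
      rw [if_pos h, if_neg (not_lt.2 h), add_zero]
    · rw [hk_big y h.le]
      show 1/y = (if |y| ≤ 1 then y else 0) + (if 1 < |y| then 1/y else 0)
      rw [if_neg (not_le.2 h), if_pos h, zero_add]
  have hk1meas : Measurable k1 :=
    Measurable.ite (measurableSet_le measurable_abs measurable_const)
      measurable_id measurable_const
  have hk2meas : Measurable k2 :=
    Measurable.ite (measurableSet_lt measurable_const measurable_abs)
      (measurable_const.div measurable_id) measurable_const
  have hk1bdd : ∀ y : ℝ, |k1 y| ≤ 1 := by
    intro y
    show |if |y| ≤ 1 then y else 0| ≤ 1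
    split
    · assumption
    · simp
  have hk2bdd : ∀ y : ℝ, |k2 y| ≤ 1 := by
    intro y
    show |if 1 < |y| then 1/y else 0| ≤ 1
    split
    · rename_i h
      rw [abs_div, abs_one, div_le_one (lt_trans one_pos h)]
      exact h.le
    · simp
  -- integrability of building blocks, for fixed s > 0
  have hψs_int : ∀ s : ℝ, 0 < s → Integrable (fun y : ℝ => (ψ : ℝ → ℝ) (y * s)) := by
    intro s hs
    have h := (integrable_comp_mul_left_iff (fun x : ℝ => (ψ : ℝ → ℝ) x) hs.ne').2 ψ.integrable
    refine h.congr (ae_of_all _ fun y => ?_)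
    show (ψ : ℝ → ℝ) (s * y) = (ψ : ℝ → ℝ) (y * s)
    rw [mul_comm]
  have hψ's_int : ∀ s : ℝ, 0 < s → Integrable (fun y : ℝ => ψ' (y * s)) := by
    intro s hs
    have h := (integrable_comp_mul_left_iff ψ' hs.ne').2 hψ'int
    refine h.congr (ae_of_all _ fun y => ?_)
    show ψ' (s * y) = ψ' (y * s)
    rw [mul_comm]
  have hψscont : ∀ s : ℝ, Continuous (fun y : ℝ => (ψ : ℝ → ℝ) (y * s)) :=
    fun s => ψ.continuous.comp (continuous_id.mul continuous_const)
  have hwψ_int : ∀ s : ℝ, 0 < s → Integrable (fun y : ℝ => w y * (ψ : ℝ → ℝ) (y * s)) := by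
    intro s hs
    refine (hψs_int s hs).bdd_mul hwcont.aestronglyMeasurable (c := Mv + |α|) (ae_of_all _ fun y => ?_)
    rw [Real.norm_eq_abs]
    exact hwbdd y
  have hk1ψ_int : ∀ s : ℝ, 0 < s → Integrable (fun y : ℝ => k1 y * (ψ : ℝ → ℝ) (y * s)) := by
    intro s hs
    refine (hψs_int s hs).bdd_mul hk1meas.aestronglyMeasurable (c := 1) (ae_of_all _ fun y => ?_)
    rw [Real.norm_eq_abs]
    exact hk1bdd y
  have hk2ψ_int : ∀ s : ℝ, 0 < s → Integrable (fun y : ℝ => k2 y * (ψ : ℝ → ℝ) (y * s)) := by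
    intro s hs
    refine (hψs_int s hs).bdd_mul hk2meas.aestronglyMeasurable (c := 1) (ae_of_all _ fun y => ?_)
    rw [Real.norm_eq_abs]
    exact hk2bdd y
  -- the k2 integral is exactly the truncated principal value
  have hA3link : ∀ s : ℝ, 0 < s →
      (∫ y : ℝ, k2 y * (ψ : ℝ → ℝ) (y * s)) = ∫ x in {x : ℝ | s < |x|}, (ψ : ℝ → ℝ) x / x := by
    intro s hs
    set H : ℝ → ℝ := fun x => if s < |x| then (ψ : ℝ → ℝ) x / x else 0 with hHdef
    have hHpt : ∀ y : ℝ, k2 y * (ψ : ℝ → ℝ) (y * s) = s * H (y * s) := by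
      intro y
      rcases lt_or_ge 1 |y| with h | h
      · have hy0 : y ≠ 0 := by
          intro hy
          rw [hy, abs_zero] at h
          linarith
        have habs : s < |y * s| := by
          rw [abs_mul, abs_of_pos hs]
          nlinarith [hs]
        show (if 1 < |y| then 1/y else 0) * (ψ : ℝ → ℝ) (y * s) = s * H (y * s)
        rw [if_pos h, hHdef]
        show 1/y * (ψ : ℝ → ℝ) (y * s) = s * if s < |y * s| then (ψ : ℝ → ℝ) (y*s) / (y*s) else 0
        rw [if_pos habs]
        field_simp
      · have habs : ¬ (s < |y * s|) := by
          rw [abs_mul, abs_of_pos hs]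
          push_neg
          nlinarith [hs, abs_nonneg y]
        show (if 1 < |y| then 1/y else 0) * (ψ : ℝ → ℝ) (y * s) = s * H (y * s)
        rw [if_neg (not_lt.2 h), hHdef]
        show 0 * (ψ : ℝ → ℝ) (y * s) = s * if s < |y * s| then (ψ : ℝ → ℝ) (y*s) / (y*s) else 0
        rw [if_neg habs, mul_zero, zero_mul]
    have hchg : (∫ y : ℝ, H (y * s)) = |s⁻¹| • ∫ x : ℝ, H x :=
      MeasureTheory.Measure.integral_comp_mul_right H s
    have hSmeas : MeasurableSet {x : ℝ | s < |x|} :=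
      measurableSet_lt measurable_const measurable_abs
    have hHind : ∫ x : ℝ, H x = ∫ x in {x : ℝ | s < |x|}, (ψ : ℝ → ℝ) x / x := by
      rw [← MeasureTheory.integral_indicator hSmeas]
      congr 1
    calc ∫ y : ℝ, k2 y * (ψ : ℝ → ℝ) (y * s) = ∫ y : ℝ, s * H (y * s) := by
          congr 1; funext y; exact hHpt y
      _ = s * ∫ y : ℝ, H (y * s) := MeasureTheory.integral_const_mul s _
      _ = s * (|s⁻¹| • ∫ x : ℝ, H x) := by rw [hchg]
      _ = ∫ x : ℝ, H x := by
          rw [abs_of_pos (inv_pos.2 hs), smul_eq_mul]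
          field_simp
      _ = _ := hHind
  -- the k1 integral tends to zero
  have hA2 : Tendsto (fun s : ℝ => ∫ y : ℝ, k1 y * (ψ : ℝ → ℝ) (y * s))
      (nhdsWithin 0 (Set.Ioi 0)) (nhds 0) := by
    have hlim0 : Tendsto (fun s : ℝ => ∫ y : ℝ, k1 y * (ψ : ℝ → ℝ) (y * s))
        (nhdsWithin 0 (Set.Ioi 0)) (nhds (∫ y : ℝ, k1 y * (ψ : ℝ → ℝ) 0)) := by
      refine tendsto_integral_filter_of_dominated_convergence
        (fun y => Set.indicator (Icc (-1:ℝ) 1) (fun _ => Cψ) y) ?_ ?_ ?_ ?_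
      · refine Eventually.of_forall fun s => ?_
        exact (hk1meas.aestronglyMeasurable.mul (hψscont s).aestronglyMeasurable)
      · refine Eventually.of_forall fun s => ae_of_all _ fun y => ?_
        show ‖k1 y * (ψ : ℝ → ℝ) (y * s)‖ ≤ Set.indicator (Icc (-1:ℝ) 1) (fun _ => Cψ) y
        rcases le_or_gt |y| 1 with h | h
        · have hmem : y ∈ Icc (-1:ℝ) 1 := abs_le.1 h
          rw [Set.indicator_of_mem hmem]
          rw [Real.norm_eq_abs, abs_mul]
          have h1 : |k1 y| ≤ 1 := hk1bdd y
          have h2 : |(ψ : ℝ → ℝ) (y * s)| ≤ Cψ := by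
            have := hCψ' (y * s)
            rwa [Real.norm_eq_abs] at this
          nlinarith [abs_nonneg (k1 y), abs_nonneg ((ψ : ℝ → ℝ) (y * s))]
        · have hnmem : y ∉ Icc (-1:ℝ) 1 := fun hmem => absurd (abs_le.2 hmem) (not_le.2 h)
          rw [Set.indicator_of_notMem hnmem]
          show ‖k1 y * (ψ : ℝ → ℝ) (y * s)‖ ≤ 0
          have : k1 y = 0 := by
            show (if |y| ≤ 1 then y else 0) = 0
            rw [if_neg (not_le.2 h)]
          rw [this, zero_mul, norm_zero]
      · rw [integrable_indicator_iff measurableSet_Icc]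
        exact integrableOn_const (by simp [Real.volume_Icc])
      · refine ae_of_all _ fun y => ?_
        have h1 : Tendsto (fun s : ℝ => y * s) (nhdsWithin 0 (Set.Ioi 0)) (nhds 0) := by
          have h2 := (show Continuous (fun s : ℝ => y * s) from
            continuous_const.mul continuous_id).tendsto 0
          rw [mul_zero] at h2
          exact h2.mono_left nhdsWithin_le_nhds
        exact ((ψ.continuous.tendsto 0).comp h1).const_mul (k1 y)
    have hzero : (∫ y : ℝ, k1 y * (ψ : ℝ → ℝ) 0) = 0 := by
      have hk1_int : Integrable k1 := by
        refine (integrable_indicator_iff (measurableSet_Icc (a := (-1:ℝ)) (b := 1))).2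
          ((integrableOn_const (by simp [Real.volume_Icc])) : IntegrableOn (fun _ => (1:ℝ)) _) |>.mono'
          hk1meas.aestronglyMeasurable ?_
        refine ae_of_all _ fun y => ?_
        rcases le_or_gt |y| 1 with h | h
        · have hmem : y ∈ Icc (-1:ℝ) 1 := abs_le.1 h
          rw [Set.indicator_of_mem hmem, Real.norm_eq_abs]
          exact hk1bdd y
        · have hnmem : y ∉ Icc (-1:ℝ) 1 := fun hmem => absurd (abs_le.2 hmem) (not_le.2 h)
          rw [Set.indicator_of_notMem hnmem]
          show ‖k1 y‖ ≤ 0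
          have : k1 y = 0 := by
            show (if |y| ≤ 1 then y else 0) = 0
            rw [if_neg (not_le.2 h)]
          rw [this, norm_zero]
      have hodd : ∀ y : ℝ, k1 (-y) = - k1 y := by
        intro y
        show (if |(-y)| ≤ 1 then -y else 0) = - if |y| ≤ 1 then y else 0
        rw [abs_neg]
        split <;> simp
      have h1 : ∫ y : ℝ, k1 y = 0 := by
        have h2 : ∫ y : ℝ, k1 (-y) = ∫ y : ℝ, k1 y := integral_neg_eq_self k1 volume
        have h3 : ∫ y : ℝ, k1 (-y) = - ∫ y : ℝ, k1 y := by
          simp only [hodd]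
          exact integral_neg k1
        linarith
      rw [MeasureTheory.integral_mul_const, h1, zero_mul]
    rw [hzero] at hlim0
    exact hlim0
  -- the main IBP piece
  have hibp : ∀ s : ℝ, 0 < s →
      (∫ y : ℝ, w y * (ψ : ℝ → ℝ) (y * s)) = - ∫ u : ℝ, W (u * s⁻¹) * ψ' u := by
    intro s hs
    have hvderiv : ∀ x : ℝ, HasDerivAt (fun y : ℝ => (ψ : ℝ → ℝ) (y * s)) (ψ' (x * s) * s) x :=
      fun x => (hψderiv (x * s)).comp x (hasDerivAt_mul_const s)
    have hWψ'_int : Integrable (fun y : ℝ => W y * (ψ' (y * s) * s)) := by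
      refine (((hψ's_int s hs).mul_const s).bdd_mul hWcont.aestronglyMeasurable
        (c := MW) (ae_of_all _ fun y => ?_))
      rw [Real.norm_eq_abs]
      exact hMW y
    have htop : Tendsto (fun y : ℝ => W y * (ψ : ℝ → ℝ) (y * s)) atTop (nhds 0) := by
      have h1 : Tendsto (fun y : ℝ => y * s) atTop atTop :=
        Tendsto.atTop_mul_const hs tendsto_id
      have h2 := hWtop.mul (hψtop.comp h1)
      rw [mul_zero] at h2
      exact h2
    have hbot : Tendsto (fun y : ℝ => W y * (ψ : ℝ → ℝ) (y * s)) atBot (nhds 0) := by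
      have h1 : Tendsto (fun y : ℝ => y * s) atBot atBot :=
        Tendsto.atBot_mul_const hs tendsto_id
      have h2 := hWbot.mul (hψbot.comp h1)
      rw [zero_mul] at h2
      exact h2
    have h := MeasureTheory.integral_mul_deriv_eq_deriv_mul (fun x _ => hWderiv x) (fun x _ => hvderiv x) hWψ'_int
      (hwψ_int s hs) hbot htop
    -- h : ∫ W y * (ψ' (y*s) * s) = 0 - 0 - ∫ w y * ψ (y*s)
    have hchg : (∫ y : ℝ, W y * (ψ' (y * s) * s)) = ∫ u : ℝ, W (u * s⁻¹) * ψ' u := by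
      set G2 : ℝ → ℝ := fun u => W (u * s⁻¹) * ψ' u with hG2def
      have h2 : (∫ y : ℝ, G2 (y * s)) = |s⁻¹| • ∫ u : ℝ, G2 u :=
        MeasureTheory.Measure.integral_comp_mul_right G2 s
      have h3 : ∀ y : ℝ, G2 (y * s) = W y * ψ' (y * s) := by
        intro y
        show W (y * s * s⁻¹) * ψ' (y * s) = W y * ψ' (y * s)
        have he : y * s * s⁻¹ = y := by field_simp
        rw [he]
      rw [show (fun y : ℝ => W y * (ψ' (y * s) * s)) = fun y : ℝ => (W y * ψ' (y * s)) * s by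
        funext y; ring]
      calc ∫ y : ℝ, (W y * ψ' (y * s)) * s
          = (∫ y : ℝ, W y * ψ' (y * s)) * s := MeasureTheory.integral_mul_const _ _
        _ = (∫ y : ℝ, G2 (y * s)) * s := by
            congr 1
            congr 1
            funext y
            exact (h3 y).symm
        _ = (|s⁻¹| • ∫ u : ℝ, G2 u) * s := by rw [h2]
        _ = ∫ u : ℝ, G2 u := by
            rw [abs_of_pos (inv_pos.2 hs), smul_eq_mul]
            field_simp
        _ = ∫ u : ℝ, W (u * s⁻¹) * ψ' u := rfl
    rw [hchg] at h
    linarith [h]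
  -- a.e. nonvanishing
  have hne : ∀ᵐ u : ℝ, u ≠ 0 := by
    rw [ae_iff]
    have h0 : {u : ℝ | ¬ u ≠ 0} = {0} := by ext u; simp
    rw [h0]
    simp
  -- limit of the IBP integral by dominated convergence
  have hDCT : Tendsto (fun s : ℝ => ∫ u : ℝ, W (u * s⁻¹) * ψ' u)
      (nhdsWithin 0 (Set.Ioi 0)) (nhds (∫ u : ℝ, (if 0 < u then c else 0) * ψ' u)) := by
    refine tendsto_integral_filter_of_dominated_convergence (fun u => MW * ‖ψ' u‖) ?_ ?_ ?_ ?_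
    · refine Eventually.of_forall fun s => ?_
      exact ((hWcont.comp (continuous_id.mul continuous_const)).mul hψ'cont).aestronglyMeasurable
    · refine Eventually.of_forall fun s => ae_of_all _ fun u => ?_
      rw [norm_mul]
      have h1 : ‖W (u * s⁻¹)‖ ≤ MW := by rw [Real.norm_eq_abs]; exact hMW _
      exact mul_le_mul_of_nonneg_right h1 (norm_nonneg (ψ' u))
    · exact hψ'int.norm.const_mul MW
    · filter_upwards [hne] with u hu
      rcases hu.lt_or_gt with hneg | hpos
      · rw [if_neg (not_lt.2 hneg.le)]
        have h2 : Tendsto (fun s : ℝ => (-u) * s⁻¹) (nhdsWithin 0 (Set.Ioi 0)) atTop :=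
          Tendsto.const_mul_atTop (by linarith) tendsto_inv_nhdsGT_zero
        have h1 : Tendsto (fun s : ℝ => u * s⁻¹) (nhdsWithin 0 (Set.Ioi 0)) atBot := by
          have h3 := tendsto_neg_atTop_atBot.comp h2
          refine h3.congr fun s => ?_
          show -((-u) * s⁻¹) = u * s⁻¹
          ring
        exact (hWbot.comp h1).mul_const (ψ' u)
      · rw [if_pos hpos]
        have h1 : Tendsto (fun s : ℝ => u * s⁻¹) (nhdsWithin 0 (Set.Ioi 0)) atTop :=
          Tendsto.const_mul_atTop hpos tendsto_inv_nhdsGT_zero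
        exact (hWtop.comp h1).mul_const (ψ' u)
  have hlimfun : (∫ u : ℝ, (if 0 < u then c else 0) * ψ' u) = c * (0 - ψ 0) := by
    have hIoi : (∫ u in Ioi (0:ℝ), ψ' u) = 0 - ψ 0 :=
      MeasureTheory.integral_Ioi_of_hasDerivAt_of_tendsto
        ψ.continuous.continuousWithinAt (fun x _ => hψderiv x) hψ'int.integrableOn hψtop
    have h1 : (fun u : ℝ => (if 0 < u then c else 0) * ψ' u)
        = Set.indicator (Ioi (0:ℝ)) (fun u => c * ψ' u) := by
      funext u
      rw [Set.indicator_apply]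
      by_cases h : 0 < u
      · rw [if_pos h, if_pos (show u ∈ Ioi (0:ℝ) from h)]
      · rw [if_neg h, if_neg (show u ∉ Ioi (0:ℝ) from h), zero_mul]
    rw [h1, MeasureTheory.integral_indicator measurableSet_Ioi,
      MeasureTheory.integral_const_mul, hIoi]
  have hA1 : Tendsto (fun s : ℝ => ∫ y : ℝ, w y * (ψ : ℝ → ℝ) (y * s))
      (nhdsWithin 0 (Set.Ioi 0)) (nhds (c * ψ 0)) := by
    rw [hlimfun] at hDCT
    have h1 := hDCT.neg
    rw [show -(c * (0 - ψ 0)) = c * ψ 0 by ring] at h1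
    refine h1.congr' ?_
    filter_upwards [self_mem_nhdsWithin] with s hs
    exact (hibp s hs).symm
  -- assemble the scaled integral
  set G : ℝ → ℝ := fun s => ∫ y : ℝ, v y * (ψ : ℝ → ℝ) (y * s) with hGdef
  have hGdecomp : ∀ s : ℝ, 0 < s → G s
      = (∫ y : ℝ, w y * (ψ : ℝ → ℝ) (y * s))
        + (α * ∫ y : ℝ, k1 y * (ψ : ℝ → ℝ) (y * s))
        + α * ∫ x in {x : ℝ | s < |x|}, (ψ : ℝ → ℝ) x / x := by
    intro s hs
    have hpt : (fun y : ℝ => v y * (ψ : ℝ → ℝ) (y * s))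
        = fun y : ℝ => w y * (ψ : ℝ → ℝ) (y * s)
          + (α * (k1 y * (ψ : ℝ → ℝ) (y * s)) + α * (k2 y * (ψ : ℝ → ℝ) (y * s))) := by
      funext y
      have h1 : v y = w y + α * k y := by
        show v y = (v y - α * k y) + α * k y
        ring
      rw [h1, hksplit y]
      ring
    have hint1 : Integrable (fun y : ℝ => α * (k1 y * (ψ : ℝ → ℝ) (y * s))) :=
      (hk1ψ_int s hs).const_mul α
    have hint2 : Integrable (fun y : ℝ => α * (k2 y * (ψ : ℝ → ℝ) (y * s))) :=
      (hk2ψ_int s hs).const_mul α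
    have hint12 : Integrable (fun y : ℝ => α * (k1 y * (ψ : ℝ → ℝ) (y * s))
        + α * (k2 y * (ψ : ℝ → ℝ) (y * s))) := hint1.add hint2
    show (∫ y : ℝ, v y * (ψ : ℝ → ℝ) (y * s)) = _
    rw [hpt, integral_add (hwψ_int s hs) hint12, integral_add hint1 hint2,
      MeasureTheory.integral_const_mul α, MeasureTheory.integral_const_mul α, hA3link s hs]
    ring
  have hG : Tendsto G (nhdsWithin 0 (Set.Ioi 0)) (nhds (c * ψ 0 + α * P)) := by
    have h := (hA1.add (hA2.const_mul α)).add (hP.const_mul α)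
    rw [mul_zero, add_zero] at h
    refine h.congr' ?_
    filter_upwards [self_mem_nhdsWithin] with s hs
    exact (hGdecomp s hs).symm
  have hroot : Tendsto (fun t : ℝ => t ^ ((1:ℝ)/3)) (nhdsWithin 0 (Set.Ioi 0))
      (nhdsWithin 0 (Set.Ioi 0)) := by
    have h1 : Tendsto (fun t : ℝ => t ^ ((1:ℝ)/3)) (nhds 0) (nhds 0) := by
      have h2 := (Real.continuousAt_rpow_const 0 ((1:ℝ)/3) (Or.inr (by norm_num))).tendsto
      rwa [Real.zero_rpow (by norm_num : (1:ℝ)/3 ≠ 0)] at h2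
    refine tendsto_nhdsWithin_of_tendsto_nhds_of_eventually_within _
      (h1.mono_left nhdsWithin_le_nhds) ?_
    filter_upwards [self_mem_nhdsWithin] with t ht
    exact Real.rpow_pos_of_pos ht _
  have hfinal := hG.comp hroot
  refine hfinal.congr' ?_
  filter_upwards [self_mem_nhdsWithin] with t ht
  have ht' : (0:ℝ) < t := ht
  have hσpos : (0:ℝ) < t ^ (-(1:ℝ)/3) := Real.rpow_pos_of_pos ht' _
  have hspos : (0:ℝ) < t ^ ((1:ℝ)/3) := Real.rpow_pos_of_pos ht' _
  have hσs : t ^ (-(1:ℝ)/3) * t ^ ((1:ℝ)/3) = 1 := by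
    rw [← Real.rpow_add ht']
    norm_num
  show G (t ^ ((1:ℝ)/3)) = ∫ x : ℝ, t ^ (-(1:ℝ)/3) * v (x * t ^ (-(1:ℝ)/3)) * (ψ : ℝ → ℝ) x
  set g0 : ℝ → ℝ := fun y => v y * (ψ : ℝ → ℝ) (y * t ^ ((1:ℝ)/3)) with hg0def
  have h2 : (∫ x : ℝ, g0 (x * t ^ (-(1:ℝ)/3)))
      = |(t ^ (-(1:ℝ)/3))⁻¹| • ∫ y : ℝ, g0 y :=
    MeasureTheory.Measure.integral_comp_mul_right g0 _
  have h3 : ∀ x : ℝ, g0 (x * t ^ (-(1:ℝ)/3))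
      = v (x * t ^ (-(1:ℝ)/3)) * (ψ : ℝ → ℝ) x := by
    intro x
    show v (x * t ^ (-(1:ℝ)/3)) * (ψ : ℝ → ℝ) (x * t ^ (-(1:ℝ)/3) * t ^ ((1:ℝ)/3)) = _
    rw [mul_assoc, hσs, mul_one]
  calc G (t ^ ((1:ℝ)/3))
      = ∫ y : ℝ, g0 y := rfl
    _ = t ^ (-(1:ℝ)/3) * ((t ^ (-(1:ℝ)/3))⁻¹ * ∫ y : ℝ, g0 y) := by
        field_simp
    _ = t ^ (-(1:ℝ)/3) * (|(t ^ (-(1:ℝ)/3))⁻¹| • ∫ y : ℝ, g0 y) := by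
        rw [abs_of_pos (inv_pos.2 hσpos), smul_eq_mul]
    _ = t ^ (-(1:ℝ)/3) * ∫ x : ℝ, g0 (x * t ^ (-(1:ℝ)/3)) := by
        rw [h2]
    _ = t ^ (-(1:ℝ)/3) * ∫ x : ℝ, v (x * t ^ (-(1:ℝ)/3)) * (ψ : ℝ → ℝ) x := by
        congr 1
        congr 1
        funext x
        exact h3 x
    _ = ∫ x : ℝ, t ^ (-(1:ℝ)/3) * (v (x * t ^ (-(1:ℝ)/3)) * (ψ : ℝ → ℝ) x) :=
        (MeasureTheory.integral_const_mul _ _).symm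
    _ = ∫ x : ℝ, t ^ (-(1:ℝ)/3) * v (x * t ^ (-(1:ℝ)/3)) * (ψ : ℝ → ℝ) x := by
        congr 1
        funext x
        ring
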